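/- Let (S, A, T, γ) be a finite MDP with γ ∈ (0,1), deterministic dynamics given by N : S × A → S, and decomposable transition dynamics. Let r : S → ℝ be a state-only ground-truth reward, and suppose g, h : S → ℝ satisfy, for every feasible transition (s, a, s') with s' = N(s,a), g(s) + γ h(s') − h(s) = A^soft_r(s,a) (i.e. the AIRL reward network f(s,a,s') = g(s) + γh(s') − h(s) attains the global optimum, the soft advantage of r). Then there exist constants k₁, k₂ ∈ ℝ such that g(s) = r(s) + k₁ and h(s) = V^soft_r(s) + k₂ for all s ∈ S. -/

import Mathlib

/-! STATEMENT 14: AIRL reward-network recovery. In a deterministic, decomposable finite MDP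
with `γ ∈ (0,1)` and state-only ground-truth reward `r`, if `f(s,a,s′) = g(s) + γ h(s′) − h(s)`
equals the soft advantage `A^soft_r(s,a)` on all feasible transitions, then `g = r + k₁` and
`h = V^soft_r + k₂` for constants `k₁, k₂`. -/

/-- `u` and `v` are 1-step linked under `T`: there are a state `s` and actions `a, b`
with `T(u|s,a) > 0` and `T(v|s,b) > 0`. -/
def OneStepLinked {S A : Type*} (T : S → A → S → ℝ) (u v : S) : Prop :=
  ∃ (s : S) (a b : A), 0 < T s a u ∧ 0 < T s b v

/-- `u` and `v` are linked under `T`: they are `n`-step linked for some `n`, where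
`u, v` are `(n+1)`-step linked if they are `n`-step linked or some intermediate `s`
is such that `u` is `n`-step linked to `s` and `s` is 1-step linked to `v`. -/
inductive Linked {S A : Type*} (T : S → A → S → ℝ) : S → S → Prop
  | base {u v : S} : OneStepLinked T u v → Linked T u v
  | step {u s v : S} : Linked T u s → OneStepLinked T s v → Linked T u v

/-- Transition dynamics are decomposable if all pairs of states are linked. -/
def Decomposable {S A : Type*} (T : S → A → S → ℝ) : Prop :=
  ∀ u v : S, Linked T u v

theorem stmt14 {S A : Type*} [Fintype S] [Fintype A] [DecidableEq S] [Nonempty S] [Nonempty A]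
    (T : S → A → S → ℝ)
    (hT0 : ∀ s a s', 0 ≤ T s a s') (hT1 : ∀ s a, ∑ s', T s a s' = 1)
    (γ : ℝ) (hγ0 : 0 < γ) (hγ1 : γ < 1)
    -- deterministic dynamics given by `N`
    (N : S → A → S) (hdet : ∀ s a s', T s a s' = if s' = N s a then 1 else 0)
    -- decomposable dynamics
    (hdec : Decomposable T)
    -- state-only ground-truth reward, viewed as `r(s,a,s') = r(s)`
    (r : S → ℝ)
    -- `Qr` is the (unique) fixed point of the soft Bellman operator for `r`
    (Qr : S → A → ℝ)
    (hQr : ∀ s a, Qr s a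
      = ∑ s', T s a s' * (r s + γ * Real.log (∑ a', Real.exp (Qr s' a'))))
    -- the reward network `f(s,a,s') = g(s) + γ h(s') − h(s)` attains the global optimum,
    -- i.e. equals the soft advantage `A^soft_r(s,a)` on every feasible transition
    (g h : S → ℝ)
    (hopt : ∀ s a, g s + γ * h (N s a) - h s
      = Qr s a - Real.log (∑ a', Real.exp (Qr s a'))) :
    ∃ k₁ k₂ : ℝ, (∀ s, g s = r s + k₁) ∧
      (∀ s, h s = Real.log (∑ a', Real.exp (Qr s a')) + k₂) := by
  classical
  set V : S → ℝ := fun s => Real.log (∑ a', Real.exp (Qr s a')) with hV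
  have hQ : ∀ s a, Qr s a = r s + γ * V (N s a) := by
    intro s a
    rw [hQr s a]
    have he : ∀ s', T s a s' * (r s + γ * V s')
        = if s' = N s a then r s + γ * V s' else 0 := by
      intro s'; rw [hdet]; split <;> simp
    show ∑ s', T s a s' * (r s + γ * V s') = r s + γ * V (N s a)
    simp_rw [he]
    simp
  set φ : S → ℝ := fun s => h s - V s with hφ
  have key : ∀ s a, g s - r s = φ s - γ * φ (N s a) := by
    intro s a
    have h1 := hopt s a
    have h2 := hQ s a
    simp only [hφ]
    nlinarith [h1, h2]
  have hone : ∀ u v, OneStepLinked T u v → φ u = φ v := by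
    rintro u v ⟨s, a, b, ha, hb⟩
    rw [hdet] at ha hb
    split_ifs at ha with h1
    · split_ifs at hb with h2
      · subst h1; subst h2
        have e1 := key s a
        have e2 := key s b
        have : γ * φ (N s a) = γ * φ (N s b) := by linarith
        exact mul_left_cancel₀ (ne_of_gt hγ0) this
      · linarith
    · linarith
  have hlinked : ∀ u v, Linked T u v → φ u = φ v := by
    intro u v hl
    induction hl with
    | base h1 => exact hone _ _ h1
    | step h1 h2 ih => exact ih.trans (hone _ _ h2)
  have hconst : ∀ u v, φ u = φ v := fun u v => hlinked u v (hdec u v)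
  obtain ⟨s0⟩ := ‹Nonempty S›
  refine ⟨(1 - γ) * φ s0, φ s0, ?_, ?_⟩
  · intro s
    have e1 := key s (Classical.arbitrary A)
    have e2 := hconst s s0
    have e3 := hconst (N s (Classical.arbitrary A)) s0
    rw [e2, e3] at e1
    linarith
  · intro s
    have e2 := hconst s s0
    simp only [hφ] at e2
    rw [show Real.log (∑ a', Real.exp (Qr s a')) = V s from rfl]
    have e4 : φ s0 = h s0 - V s0 := rfl
    linarith
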